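/- Let H be a complex Hilbert space and let d, Q, R, K be bounded linear operators on H such that d ∘ d = 0, K is compact, ‖R‖ < 1, and Q d + d Q = Id + R + K. Then there exists a bounded finite-rank projection Π on H commuting with d (Π d = d Π), whose range is therefore a finite-dimensional d-invariant subspace, such that the map u ↦ Π u induces a well-defined linear isomorphism from ker d / ran d onto ker(d|_{ran Π}) / d(ran Π). -/

import Mathlib

open Filter Topology

section helpers
variable {H : Type*} [NormedAddCommGroup H] [InnerProductSpace ℂ H]

lemma projH_apply_le (U : Submodule ℂ H) [U.HasOrthogonalProjection] (x : H) :
    ‖(U.subtypeL.comp (Submodule.orthogonalProjectionOnto U)) x‖ ≤ ‖x‖ := by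
  have h1 := (Submodule.orthogonalProjectionOnto U).le_opNorm x
  have h2 : ‖Submodule.orthogonalProjectionOnto U‖ * ‖x‖ ≤ 1 * ‖x‖ :=
    mul_le_mul_of_nonneg_right (Submodule.orthogonalProjectionOnto_norm_le U) (norm_nonneg x)
  calc ‖(U.subtypeL.comp (Submodule.orthogonalProjectionOnto U)) x‖
      = ‖Submodule.orthogonalProjectionOnto U x‖ := rfl
    _ ≤ ‖x‖ := by nlinarith

lemma projH_eq_self {U : Submodule ℂ H} [U.HasOrthogonalProjection] {x : H} (hx : x ∈ U) :
    (U.subtypeL.comp (Submodule.orthogonalProjectionOnto U)) x = x := by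
  have : Submodule.orthogonalProjectionOnto U x = ⟨x, hx⟩ := by
    simpa using Submodule.orthogonalProjectionOnto_mem_subspace_eq_self (K := U) ⟨x, hx⟩
  simp [ContinuousLinearMap.comp_apply, this]

lemma projH_eq_zero {U : Submodule ℂ H} [U.HasOrthogonalProjection] {x : H} (hx : x ∈ Uᗮ) :
    (U.subtypeL.comp (Submodule.orthogonalProjectionOnto U)) x = 0 := by
  have : Submodule.orthogonalProjectionOnto U x = 0 :=
    Submodule.orthogonalProjectionOnto_apply_of_mem_orthogonal hx
  simp [ContinuousLinearMap.comp_apply, this]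

lemma projH_comp_norm_lt (U : Submodule ℂ H) [U.HasOrthogonalProjection] {R : H →L[ℂ] H}
    (hR : ‖R‖ < 1) : ‖(U.subtypeL.comp (Submodule.orthogonalProjectionOnto U)).comp R‖ < 1 := by
  have : ‖(U.subtypeL.comp (Submodule.orthogonalProjectionOnto U)).comp R‖ ≤ ‖R‖ := by
    apply ContinuousLinearMap.opNorm_le_bound _ (norm_nonneg R)
    intro x
    exact (projH_apply_le U (R x)).trans (R.le_opNorm x)
  linarith

end helpers

lemma lemA {H : Type*} [NormedAddCommGroup H] [InnerProductSpace ℂ H] [CompleteSpace H]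
    (K : H →L[ℂ] H) (hK : IsCompactOperator ⇑K)
    (B C' : H →L[ℂ] H) (hB : ‖B‖ < 1) (u g : ℕ → H) {M : ℝ} (hu : ∀ n, ‖u n‖ ≤ M)
    {glim : H} (hg : Tendsto g atTop (𝓝 glim))
    (hid : ∀ n, u n + B (u n) = g n + C' (K (u n))) :
    ∃ φ : ℕ → ℕ, StrictMono φ ∧ ∃ x : H, Tendsto (u ∘ φ) atTop (𝓝 x) := by
  have hK' : IsCompactOperator ⇑(K : H →ₗ[ℂ] H) := hK
  have hTc : IsCompact (closure (⇑(K : H →ₗ[ℂ] H) '' Metric.closedBall 0 M)) :=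
    hK'.isCompact_closure_image_closedBall (𝕜₁ := ℂ) M
  have hmem : ∀ n, K (u n) ∈ closure (⇑(K : H →ₗ[ℂ] H) '' Metric.closedBall 0 M) := by
    intro n
    exact subset_closure ⟨u n, by simpa [Metric.mem_closedBall, dist_zero_right] using hu n, rfl⟩
  obtain ⟨y, -, φ, hφ, hconv⟩ := hTc.tendsto_subseq hmem
  have hB' : ‖-B‖ < 1 := by simpa using hB
  set J : (H →L[ℂ] H)ˣ := Units.oneSub (-B) hB' with hJdef
  have hJval : (↑J : H →L[ℂ] H) = 1 + B := by
    rw [hJdef, Units.val_oneSub, sub_neg_eq_add]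
  have key : ∀ n, u n = (↑J⁻¹ : H →L[ℂ] H) (g n + C' (K (u n))) := by
    intro n
    have h1 : (↑J : H →L[ℂ] H) (u n) = g n + C' (K (u n)) := by
      rw [hJval]
      simpa [ContinuousLinearMap.add_apply] using hid n
    calc u n = ((↑J⁻¹ * ↑J : H →L[ℂ] H)) (u n) := by
            rw [Units.inv_mul]; simp
      _ = (↑J⁻¹ : H →L[ℂ] H) ((↑J : H →L[ℂ] H) (u n)) := rfl
      _ = (↑J⁻¹ : H →L[ℂ] H) (g n + C' (K (u n))) := by rw [h1]
  refine ⟨φ, hφ, (↑J⁻¹ : H →L[ℂ] H) (glim + C' y), ?_⟩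
  have h2 : Tendsto (fun n => g (φ n) + C' (K (u (φ n)))) atTop (𝓝 (glim + C' y)) :=
    ((hg.comp hφ.tendsto_atTop).add ((C'.continuous.tendsto y).comp hconv))
  have h3 := ((↑J⁻¹ : H →L[ℂ] H).continuous.tendsto _).comp h2
  refine h3.congr ?_
  intro n
  exact (key (φ n)).symm

set_option maxHeartbeats 2000000 in
theorem exists_finiteRank_projection_inducing_cohomology_iso
    {H : Type*} [NormedAddCommGroup H] [InnerProductSpace ℂ H] [CompleteSpace H]
    (d Q R K : H →L[ℂ] H)
    (hd : d.comp d = 0)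
    (hK : IsCompactOperator ⇑K)
    (hR : ‖R‖ < 1)
    (heq : Q.comp d + d.comp Q = ContinuousLinearMap.id ℂ H + R + K) :
    ∃ P : H →L[ℂ] H,
      P.comp P = P ∧
      FiniteDimensional ℂ ↥(LinearMap.range (P : H →ₗ[ℂ] H)) ∧
      P.comp d = d.comp P ∧
      ∃ (hmem : ∀ x ∈ LinearMap.ker (d : H →ₗ[ℂ] H), P x ∈ LinearMap.range (P : H →ₗ[ℂ] H) ⊓ LinearMap.ker (d : H →ₗ[ℂ] H))
        (e : ((↥(LinearMap.ker (d : H →ₗ[ℂ] H))) ⧸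
                (Submodule.comap (LinearMap.ker (d : H →ₗ[ℂ] H)).subtype (LinearMap.range (d : H →ₗ[ℂ] H))))
              ≃ₗ[ℂ]
             ((↥(LinearMap.range (P : H →ₗ[ℂ] H) ⊓ LinearMap.ker (d : H →ₗ[ℂ] H))) ⧸
                (Submodule.comap (LinearMap.range (P : H →ₗ[ℂ] H) ⊓ LinearMap.ker (d : H →ₗ[ℂ] H)).subtype
                  (Submodule.map (d : H →ₗ[ℂ] H) (LinearMap.range (P : H →ₗ[ℂ] H)))))),
        (Submodule.comap (LinearMap.range (P : H →ₗ[ℂ] H) ⊓ LinearMap.ker (d : H →ₗ[ℂ] H)).subtype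
            (Submodule.map (d : H →ₗ[ℂ] H) (LinearMap.range (P : H →ₗ[ℂ] H)))).mkQ
          ∘ₗ ((P : H →ₗ[ℂ] H).restrict hmem)
        = (e : _ →ₗ[ℂ] _)
          ∘ₗ (Submodule.comap (LinearMap.ker (d : H →ₗ[ℂ] H)).subtype (LinearMap.range (d : H →ₗ[ℂ] H))).mkQ := by
  classical
  have happ : ∀ x : H, Q (d x) + d (Q x) = x + R x + K x := by
    intro x
    have := ContinuousLinearMap.ext_iff.mp heq x
    simpa using this
  have hdd : ∀ x : H, d (d x) = 0 := by
    intro x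
    have := ContinuousLinearMap.ext_iff.mp hd x
    simpa using this
  set N : Submodule ℂ H := LinearMap.ker (d : H →ₗ[ℂ] H) with hN
  have hrange_le_ker : LinearMap.range (d : H →ₗ[ℂ] H) ≤ N := by
    rintro _ ⟨x, rfl⟩
    exact hdd x
  have hNclosed : IsClosed (N : Set H) := by
    have h : (N : Set H) = d ⁻¹' {0} := by
      ext x; simp [hN, LinearMap.mem_ker]
    rw [h]
    exact isClosed_singleton.preimage d.continuous
  haveI : CompleteSpace N := hNclosed.completeSpace_coe
  set V : Submodule ℂ H := Nᗮ with hV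
  haveI : CompleteSpace V := N.isClosed_orthogonal.completeSpace_coe
  set π : H →L[ℂ] H := V.subtypeL.comp (Submodule.orthogonalProjectionOnto V) with hπ
  -- Step 1: d is bounded below on V = (ker d)ᗮ
  have hbound : ∃ c : ℝ, 0 < c ∧ ∀ x ∈ V, c * ‖x‖ ≤ ‖d x‖ := by
    by_contra hcon
    push_neg at hcon
    have hz : ∀ n : ℕ, ∃ z : H, z ∈ V ∧ ‖z‖ = 1 ∧ ‖d z‖ < 1 / (n + 1) := by
      intro n
      obtain ⟨x, hxV, hxlt⟩ := hcon (1 / (n + 1)) (by positivity)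
      have hx0 : x ≠ 0 := by
        rintro rfl
        simp at hxlt
      have hxn : ‖x‖ ≠ 0 := norm_ne_zero_iff.mpr hx0
      refine ⟨(‖x‖⁻¹ : ℂ) • x, V.smul_mem _ hxV, ?_, ?_⟩
      · rw [norm_smul]
        simp [hxn, inv_mul_cancel₀]
      · rw [map_smul, norm_smul]
        have : (‖x‖ : ℝ)⁻¹ * ‖d x‖ < ‖x‖⁻¹ * (1 / (n + 1) * ‖x‖) := by
          apply mul_lt_mul_of_pos_left hxlt
          positivity
        calc ‖((‖x‖⁻¹ : ℂ))‖ * ‖d x‖ = ‖x‖⁻¹ * ‖d x‖ := by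
              norm_num
          _ < ‖x‖⁻¹ * (1 / (n + 1) * ‖x‖) := this
          _ = 1 / (n + 1) := by field_simp
    choose z hzV hznorm hzlt using hz
    have hid : ∀ n, z n + (π.comp R) (z n)
        = π (Q (d (z n))) + (-π) (K (z n)) := by
      intro n
      have h1 := happ (z n)
      have h2 : π (Q (d (z n))) + π (d (Q (z n)))
          = π (z n) + π (R (z n)) + π (K (z n)) := by
        rw [← map_add, ← map_add, ← map_add, h1]
      have h3 : π (d (Q (z n))) = 0 := by
        rw [hπ]
        apply projH_eq_zero
        rw [hV]
        exact Submodule.le_orthogonal_orthogonal N (hrange_le_ker ⟨Q (z n), rfl⟩)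
      have h4 : π (z n) = z n := by rw [hπ]; exact projH_eq_self (hzV n)
      rw [h3, add_zero, h4] at h2
      simp only [ContinuousLinearMap.comp_apply, ContinuousLinearMap.neg_apply]
      rw [h2]
      abel
    have hg : Tendsto (fun n : ℕ => π (Q (d (z n)))) atTop (𝓝 0) := by
      apply squeeze_zero_norm (a := fun n : ℕ => ‖π.comp Q‖ * (1 / (n + 1)))
      · intro n
        calc ‖π (Q (d (z n)))‖ = ‖(π.comp Q) (d (z n))‖ := rfl
          _ ≤ ‖π.comp Q‖ * ‖d (z n)‖ := (π.comp Q).le_opNorm _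
          _ ≤ ‖π.comp Q‖ * (1 / (n + 1)) :=
              mul_le_mul_of_nonneg_left (hzlt n).le (norm_nonneg _)
      · have := tendsto_one_div_add_atTop_nhds_zero_nat.const_mul ‖π.comp Q‖
        simpa using this
    obtain ⟨φ, hφ, x, hxconv⟩ := lemA K hK (π.comp R) (-π)
      (by rw [hπ]; exact projH_comp_norm_lt V hR) z (fun n => π (Q (d (z n))))
      (fun n => (hznorm n).le) hg hid
    have hxV : x ∈ V := by
      have : IsClosed (V : Set H) := N.isClosed_orthogonal
      exact this.mem_of_tendsto hxconv (Eventually.of_forall fun n => hzV (φ n))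
    have hxnorm : ‖x‖ = 1 := by
      have h1 : Tendsto (fun n => ‖z (φ n)‖) atTop (𝓝 ‖x‖) :=
        (continuous_norm.tendsto x).comp hxconv
      have h2 : Tendsto (fun n : ℕ => ‖z (φ n)‖) atTop (𝓝 1) := by
        simp only [hznorm]; exact (tendsto_const_nhds : Tendsto (fun _ : ℕ => (1:ℝ)) atTop (𝓝 1))
      exact tendsto_nhds_unique h1 h2
    have hdx : d x = 0 := by
      have h1 : Tendsto (fun n => d (z (φ n))) atTop (𝓝 (d x)) :=
        (d.continuous.tendsto x).comp hxconv
      have h2 : Tendsto (fun n => d (z (φ n))) atTop (𝓝 0) := by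
        apply squeeze_zero_norm (a := fun n : ℕ => 1 / (n + 1))
        · intro n
          calc ‖d (z (φ n))‖ ≤ 1 / (φ n + 1) := (hzlt (φ n)).le
            _ ≤ 1 / (n + 1) := by
                apply one_div_le_one_div_of_le (by positivity)
                have h6 : n ≤ φ n := hφ.le_apply
                have h7 : (n : ℝ) ≤ (φ n : ℝ) := by exact_mod_cast h6
                linarith
        · exact tendsto_one_div_add_atTop_nhds_zero_nat
      exact tendsto_nhds_unique h1 h2
    have hx0 : x = 0 := by
      have hxN : x ∈ N := hdx
      have := (Submodule.mem_orthogonal N x).mp hxV x hxN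
      exact inner_self_eq_zero.mp this
    rw [hx0] at hxnorm
    simp at hxnorm
  obtain ⟨c, hc, hcb⟩ := hbound
  -- Step 2: range d is closed
  set f : V →L[ℂ] H := d.comp V.subtypeL with hf
  have hanti : AntilipschitzWith (Real.toNNReal c⁻¹) ⇑f := by
    apply f.antilipschitz_of_bound
    intro x
    have h1 := hcb ↑x x.2
    have h2 : ‖(x : H)‖ ≤ c⁻¹ * ‖f x‖ := by
      rw [hf]
      have : ‖f x‖ = ‖d ↑x‖ := rfl
      rw [this]
      calc ‖(x : H)‖ = c⁻¹ * (c * ‖(x : H)‖) := by field_simp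
        _ ≤ c⁻¹ * ‖d ↑x‖ := by
            apply mul_le_mul_of_nonneg_left h1
            positivity
    calc ‖x‖ = ‖(x : H)‖ := rfl
      _ ≤ c⁻¹ * ‖f x‖ := h2
      _ = ↑(Real.toNNReal c⁻¹) * ‖f x‖ := by
          rw [Real.coe_toNNReal _ (by positivity)]
  have hfrange : ((LinearMap.range (d : H →ₗ[ℂ] H) : Submodule ℂ H) : Set H) = Set.range ⇑f := by
    ext y
    constructor
    · intro hy
      obtain ⟨x, rfl⟩ := hy
      refine ⟨⟨x - ↑(Submodule.orthogonalProjectionOnto N x), ?_⟩, ?_⟩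
      · rw [hV]; exact Submodule.sub_starProjection_mem_orthogonal x
      · show d (x - ↑(Submodule.orthogonalProjectionOnto N x)) = d x
        have h0 : d ↑(Submodule.orthogonalProjectionOnto N x) = 0 := (Submodule.orthogonalProjectionOnto N x).2
        rw [map_sub, h0, sub_zero]
    · rintro ⟨v, rfl⟩
      exact ⟨↑v, rfl⟩
  have hRdclosed : IsClosed ((LinearMap.range (d : H →ₗ[ℂ] H) : Submodule ℂ H) : Set H) := by
    rw [hfrange]
    exact hanti.isClosed_range f.uniformContinuous
  set Rd : Submodule ℂ H := LinearMap.range (d : H →ₗ[ℂ] H) with hRd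
  haveI : CompleteSpace Rd := hRdclosed.completeSpace_coe
  haveI : CompleteSpace Rdᗮ := Rd.isClosed_orthogonal.completeSpace_coe
  set W : Submodule ℂ H := N ⊓ Rdᗮ with hW
  have hWclosed : IsClosed (W : Set H) := by
    have : (W : Set H) = (N : Set H) ∩ (Rdᗮ : Set H) := rfl
    rw [this]
    exact hNclosed.inter Rd.isClosed_orthogonal
  haveI : CompleteSpace W := hWclosed.completeSpace_coe
  have hWN : W ≤ N := inf_le_left
  have hWRd : W ≤ Rdᗮ := inf_le_right
  have hRdWperp : Rd ≤ Wᗮ :=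
    le_trans (Submodule.le_orthogonal_orthogonal Rd) (Submodule.orthogonal_le hWRd)
  set ρ : H →L[ℂ] H := Rdᗮ.subtypeL.comp (Submodule.orthogonalProjectionOnto Rdᗮ) with hρ
  -- Step 3: W is finite dimensional
  have hWfd : FiniteDimensional ℂ W := by
    apply FiniteDimensional.of_isCompact_closedBall₀ (𝕜 := ℂ) one_pos
    apply IsSeqCompact.isCompact
    intro u hu
    have hu1 : ∀ n, ‖((u n : W) : H)‖ ≤ 1 := by
      intro n
      have := hu n
      rw [Metric.mem_closedBall, dist_zero_right] at this
      exact this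
    have hid : ∀ n, ((u n : W) : H) + (ρ.comp R) ((u n : W) : H)
        = (fun _ : ℕ => (0 : H)) n + (-ρ) (K ((u n : W) : H)) := by
      intro n
      set w : H := ((u n : W) : H) with hwdef
      have hwW : w ∈ W := (u n).2
      have hdw : d w = 0 := hWN hwW
      have h1 : d (Q w) = w + R w + K w := by
        have := happ w
        rw [hdw, map_zero, zero_add] at this
        exact this
      have h2 : ρ (d (Q w)) = ρ w + ρ (R w) + ρ (K w) := by
        rw [h1, map_add, map_add]
      have h3 : ρ (d (Q w)) = 0 := by
        rw [hρ]
        apply projH_eq_zero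
        exact Submodule.le_orthogonal_orthogonal Rd ⟨Q w, rfl⟩
      have h4 : ρ w = w := by rw [hρ]; exact projH_eq_self (hWRd hwW)
      rw [h3, h4] at h2
      simp only [ContinuousLinearMap.comp_apply, ContinuousLinearMap.neg_apply]
      have h5 : w + ρ (R w) + ρ (K w) = 0 := h2.symm
      calc w + ρ (R w) = w + ρ (R w) + ρ (K w) - ρ (K w) := by abel
        _ = 0 - ρ (K w) := by rw [h5]
        _ = (fun _ : ℕ => (0 : H)) n + -ρ (K w) := by simp
    obtain ⟨φ, hφ, x, hxconv⟩ := lemA K hK (ρ.comp R) (-ρ)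
      (by rw [hρ]; exact projH_comp_norm_lt Rdᗮ hR) (fun n => ((u n : W) : H))
      (fun _ : ℕ => (0 : H)) hu1 tendsto_const_nhds hid
    have hxW : x ∈ W :=
      hWclosed.mem_of_tendsto hxconv (Eventually.of_forall fun n => (u (φ n)).2)
    refine ⟨⟨x, hxW⟩, ?_, φ, hφ, ?_⟩
    · rw [Metric.mem_closedBall, dist_zero_right]
      have h1 : Tendsto (fun n => ‖((u (φ n) : W) : H)‖) atTop (𝓝 ‖x‖) :=
        (continuous_norm.tendsto x).comp hxconv
      exact le_of_tendsto h1 (Eventually.of_forall fun n => hu1 (φ n))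
    · rw [Topology.IsInducing.subtypeVal.tendsto_nhds_iff]
      exact hxconv
  -- Step 4: the projection P onto W
  set P : H →L[ℂ] H := W.subtypeL.comp (Submodule.orthogonalProjectionOnto W) with hP
  have hPW : ∀ x : H, P x ∈ W := fun x => (Submodule.orthogonalProjectionOnto W x).2
  have hrangeP : LinearMap.range (P : H →ₗ[ℂ] H) = W := by
    apply le_antisymm
    · rintro _ ⟨x, rfl⟩
      exact hPW x
    · intro w hw
      exact ⟨w, by rw [hP]; exact projH_eq_self hw⟩
  have hPP : P.comp P = P := by
    ext x
    show P (P x) = P x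
    rw [hP]
    exact projH_eq_self (hPW x)
  have hfd : FiniteDimensional ℂ ↥(LinearMap.range (P : H →ₗ[ℂ] H)) := by
    rw [hrangeP]; exact hWfd
  have hcomm : P.comp d = d.comp P := by
    ext x
    show P (d x) = d (P x)
    have h1 : P (d x) = 0 := by
      rw [hP]
      exact projH_eq_zero (hRdWperp ⟨x, rfl⟩)
    have h2 : d (P x) = 0 := hWN (hPW x)
    rw [h1, h2]
  have hmem : ∀ x ∈ LinearMap.ker (d : H →ₗ[ℂ] H), P x ∈ LinearMap.range (P : H →ₗ[ℂ] H) ⊓ LinearMap.ker (d : H →ₗ[ℂ] H) := by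
    intro x _
    exact ⟨⟨x, rfl⟩, hWN (hPW x)⟩
  -- kernel characterization
  have hker0 : ∀ x : H, x ∈ N → (P x = 0 ↔ x ∈ Rd) := by
    intro x hxN
    constructor
    · intro hPx
      have hxWperp : x ∈ Wᗮ := by
        apply Submodule.orthogonalProjectionOnto_eq_zero_iff.mp
        have : ((Submodule.orthogonalProjectionOnto W x : W) : H) = 0 := hPx
        exact Submodule.coe_eq_zero.mp this
      set y : H := ↑(Submodule.orthogonalProjectionOnto Rd x) with hy
      have hyRd : y ∈ Rd := (Submodule.orthogonalProjectionOnto Rd x).2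
      have hsub1 : x - y ∈ Rdᗮ := Submodule.sub_starProjection_mem_orthogonal x
      have hsub2 : x - y ∈ N := N.sub_mem hxN (hrange_le_ker hyRd)
      have hsubW : x - y ∈ W := ⟨hsub2, hsub1⟩
      have hsubWperp : x - y ∈ Wᗮ := Wᗮ.sub_mem hxWperp (hRdWperp hyRd)
      have hxy : x - y = 0 := by
        have h0 := (Submodule.mem_orthogonal W (x - y)).mp hsubWperp (x - y) hsubW
        exact inner_self_eq_zero.mp h0
      have : x = y := sub_eq_zero.mp hxy
      rw [this]
      exact hyRd
    · intro hxRd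
      rw [hP]
      exact projH_eq_zero (hRdWperp hxRd)
  refine ⟨P, hPP, hfd, hcomm, hmem, ?_⟩
  -- the quotient isomorphism
  set M' : Submodule ℂ H := LinearMap.range (P : H →ₗ[ℂ] H) ⊓ LinearMap.ker (d : H →ₗ[ℂ] H) with hM'
  set B' : Submodule ℂ ↥M' := Submodule.comap M'.subtype (Submodule.map (d : H →ₗ[ℂ] H) (LinearMap.range (P : H →ₗ[ℂ] H)))
    with hB'
  set A : Submodule ℂ ↥N := Submodule.comap N.subtype Rd with hA
  have hmapd : Submodule.map (d : H →ₗ[ℂ] H) (LinearMap.range (P : H →ₗ[ℂ] H)) = ⊥ := by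
    rw [hrangeP, eq_bot_iff]
    rintro y ⟨w, hw, rfl⟩
    exact hWN hw
  set Φ : ↥N →ₗ[ℂ] ↥M' := (P : H →ₗ[ℂ] H).restrict hmem with hΦ
  have hΦcoe : ∀ x : ↥N, ((Φ x : ↥M') : H) = P ↑x := fun x => rfl
  set ψ : ↥N →ₗ[ℂ] (↥M' ⧸ B') := B'.mkQ ∘ₗ Φ with hψ
  have hkerψ : ∀ x : ↥N, ψ x = 0 ↔ x ∈ A := by
    intro x
    rw [hψ]
    simp only [LinearMap.comp_apply, Submodule.mkQ_apply, Submodule.Quotient.mk_eq_zero]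
    constructor
    · intro h
      have h2 : ((Φ x : ↥M') : H) ∈ Submodule.map (d : H →ₗ[ℂ] H) (LinearMap.range (P : H →ₗ[ℂ] H)) := h
      rw [hmapd, Submodule.mem_bot, hΦcoe] at h2
      exact (hker0 ↑x x.2).mp h2
    · intro h
      show ((Φ x : ↥M') : H) ∈ Submodule.map (d : H →ₗ[ℂ] H) (LinearMap.range (P : H →ₗ[ℂ] H))
      rw [hmapd, Submodule.mem_bot, hΦcoe]
      exact (hker0 ↑x x.2).mpr h
  have hle : A ≤ LinearMap.ker ψ := fun x hx => (hkerψ x).mpr hx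
  have hge : LinearMap.ker ψ ≤ A := fun x hx => (hkerψ x).mp hx
  set e₀ : (↥N ⧸ A) →ₗ[ℂ] (↥M' ⧸ B') := A.liftQ ψ hle with he₀
  have hkerbot := Submodule.ker_liftQ_eq_bot A ψ hle hge
  have hΦsurj : ∀ m : ↥M', ∃ x : ↥N, Φ x = m := by
    intro m
    have hmW : (m : H) ∈ W := by rw [← hrangeP]; exact m.2.1
    have hmN : (m : H) ∈ N := m.2.2
    refine ⟨⟨(m : H), hmN⟩, ?_⟩
    apply Subtype.ext
    rw [hΦcoe]
    show P (m : H) = (m : H)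
    rw [hP]
    exact projH_eq_self hmW
  have hsurj : Function.Surjective e₀ := by
    intro q
    obtain ⟨m, rfl⟩ := Submodule.mkQ_surjective B' q
    obtain ⟨x, hx⟩ := hΦsurj m
    refine ⟨A.mkQ x, ?_⟩
    rw [he₀]
    show A.liftQ ψ hle (Submodule.Quotient.mk x) = B'.mkQ m
    rw [Submodule.liftQ_apply, hψ]
    show B'.mkQ (Φ x) = B'.mkQ m
    rw [hx]
  set e : (↥N ⧸ A) ≃ₗ[ℂ] (↥M' ⧸ B') :=
    LinearEquiv.ofBijective e₀ ⟨LinearMap.ker_eq_bot.mp hkerbot, hsurj⟩ with he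
  refine ⟨e, ?_⟩
  have hcoe : (e : (↥N ⧸ A) →ₗ[ℂ] (↥M' ⧸ B')) = e₀ := rfl
  show B'.mkQ ∘ₗ Φ = (e : (↥N ⧸ A) →ₗ[ℂ] (↥M' ⧸ B')) ∘ₗ A.mkQ
  rw [hcoe, he₀, Submodule.liftQ_mkQ, hψ]
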